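/- Let ℓ: ℝ × ℝ → ℝ be a loss function such that ℓ(y,·) is convex for every y. Then the optimal value of the ℓ₂-regularized cardinality-constrained problem, inf over w ∈ ℝ^p with ‖w‖₀ ≤ k of Σ_{i=1}^n ℓ(y_i, x_iᵀw) + (1/(2γ))‖w‖₂², equals the optimal value of the convex integer min–max problem, inf over s ∈ {0,1}^p with Σ_{j=1}^p s_j ≤ k of sup_{α ∈ ℝ^n} f(α,s) (equality of values in the extended reals). -/

import Mathlib

open scoped BigOperators

lemma ereal_coe_finset_sum {ι : Type*} (s : Finset ι) (g : ι → ℝ) :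
    ((∑ i ∈ s, g i : ℝ) : EReal) = ∑ i ∈ s, ((g i : ℝ) : EReal) :=
  map_sum (⟨⟨Real.toEReal, EReal.coe_zero⟩, EReal.coe_add⟩ : ℝ →+ EReal) g s

lemma ereal_le_coe_of_forall_add {x : EReal} {c : ℝ}
    (h : ∀ ε : ℝ, 0 < ε → x ≤ ((c + ε : ℝ) : EReal)) : x ≤ (c : EReal) := by
  induction x using EReal.rec with
  | bot => exact bot_le
  | coe r =>
      rw [EReal.coe_le_coe_iff]
      refine le_of_forall_pos_le_add fun ε hε => ?_
      exact EReal.coe_le_coe_iff.mp (h ε hε)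
  | top =>
      exact absurd ((h 1 one_pos).trans_lt (EReal.coe_lt_top _)) (lt_irrefl _)

lemma exists_subgrad_one_dim (g : ℝ → ℝ) (hg : ConvexOn ℝ Set.univ g) :
    ∃ m : ℝ, ∀ u : ℝ, g 0 + m * u ≤ g u := by
  set A : Set ℝ := {x | ∃ a : ℝ, a < 0 ∧ x = (g 0 - g a) / (-a)} with hA
  have hslope : ∀ a : ℝ, a < 0 → ∀ b : ℝ, 0 < b →
      (g 0 - g a) / (-a) ≤ (g b - g 0) / b := by
    intro a ha b hb
    have := hg.slope_mono_adjacent (Set.mem_univ a) (Set.mem_univ b) ha hb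
    simpa [zero_sub, sub_zero] using this
  have hne : A.Nonempty := ⟨(g 0 - g (-1)) / 1, -1, by norm_num, by norm_num⟩
  have hbdd : BddAbove A := by
    refine ⟨(g 1 - g 0) / 1, ?_⟩
    rintro x ⟨a, ha, rfl⟩
    exact hslope a ha 1 one_pos
  refine ⟨sSup A, fun u => ?_⟩
  rcases lt_trichotomy u 0 with hu | hu | hu
  · have hmem : (g 0 - g u) / (-u) ∈ A := ⟨u, hu, rfl⟩
    have h1 : (g 0 - g u) / (-u) ≤ sSup A := le_csSup hbdd hmem
    rw [div_le_iff₀ (by linarith)] at h1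
    nlinarith
  · simp [hu]
  · have h1 : sSup A ≤ (g u - g 0) / u := by
      refine csSup_le hne ?_
      rintro x ⟨a, ha, rfl⟩
      exact hslope a ha u hu
    rw [le_div_iff₀ hu] at h1
    linarith

lemma exists_subgrad_pi {n : ℕ} (φ : (Fin n → ℝ) → ℝ) (hφ : ConvexOn ℝ Set.univ φ) :
    ∃ β : Fin n → ℝ, ∀ u : Fin n → ℝ, φ 0 + ∑ i, β i * u i ≤ φ u := by
  have hcont : Continuous φ := continuousOn_univ.mp (hφ.continuousOn isOpen_univ)
  set S : Set ((Fin n → ℝ) × ℝ) := {q | φ q.1 < q.2} with hS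
  have hopen : IsOpen S := isOpen_lt (hcont.comp continuous_fst) continuous_snd
  have hconvS : Convex ℝ S := by
    intro q hq r hr a b ha hb hab
    simp only [hS, Set.mem_setOf_eq] at hq hr ⊢
    have h2 := hφ.2 (Set.mem_univ q.1) (Set.mem_univ r.1) ha hb hab
    simp only [smul_eq_mul] at h2
    have : φ (a • q.1 + b • r.1) ≤ a * φ q.1 + b * φ r.1 := h2
    calc φ (a • q + b • r).1 = φ (a • q.1 + b • r.1) := rfl
      _ ≤ a * φ q.1 + b * φ r.1 := this
      _ < a * q.2 + b * r.2 := by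
          rcases eq_or_lt_of_le ha with ha0 | ha0
          · rcases eq_or_lt_of_le hb with hb0 | hb0
            · exfalso; rw [← ha0, ← hb0] at hab; norm_num at hab
            · have := mul_lt_mul_of_pos_left hr hb0
              simp only [← ha0]; simpa using this
          · rcases eq_or_lt_of_le hb with hb0 | hb0
            · have := mul_lt_mul_of_pos_left hq ha0
              simp only [← hb0]; simpa using this
            · exact add_lt_add (mul_lt_mul_of_pos_left hq ha0)
                (mul_lt_mul_of_pos_left hr hb0)
      _ = (a • q + b • r).2 := rfl
  have hx : ((0 : Fin n → ℝ), φ 0) ∉ S := by simp [hS]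
  obtain ⟨F, hF⟩ := geometric_hahn_banach_open_point hconvS hopen hx
  set c : ℝ := F ((0 : Fin n → ℝ), (1 : ℝ)) with hc
  have hdec : ∀ (u : Fin n → ℝ) (t : ℝ), F (u, t) = F (u, 0) + t * c := by
    intro u t
    have : (u, t) = (u, (0:ℝ)) + t • ((0 : Fin n → ℝ), (1:ℝ)) := by
      simp [Prod.ext_iff]
    rw [this, map_add, map_smul, smul_eq_mul, hc]
  have hFx : F ((0 : Fin n → ℝ), φ 0) = φ 0 * c := by
    have := hdec 0 (φ 0)
    rw [this, show ((0 : Fin n → ℝ), (0:ℝ)) = 0 from rfl, map_zero, zero_add]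
  have hcneg : c < 0 := by
    have h1 : ((0 : Fin n → ℝ), φ 0 + 1) ∈ S := by simp [hS]
    have h2 := hF _ h1
    rw [hdec 0 (φ 0 + 1), hFx] at h2
    have h3 : F ((0 : Fin n → ℝ), (0:ℝ)) = 0 := by exact map_zero F
    rw [h3] at h2
    nlinarith
  have hmain : ∀ u : Fin n → ℝ, F (u, 0) + φ u * c ≤ φ 0 * c := by
    intro u
    by_contra hcon
    push_neg at hcon
    set ε : ℝ := (F (u, 0) + φ u * c - φ 0 * c) / (-c) with hε
    have hεpos : 0 < ε := div_pos (by linarith) (by linarith)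
    have hmem : (u, φ u + ε) ∈ S := by simp [hS, hεpos]
    have h2 := hF _ hmem
    rw [hdec u (φ u + ε), hFx] at h2
    have hcne : c ≠ 0 := ne_of_lt hcneg
    have h3 : ε * c = -(F (u, 0) + φ u * c - φ 0 * c) := by
      rw [hε, div_neg, neg_mul, div_mul_cancel₀ _ hcne]
    nlinarith
  refine ⟨fun i => F ((fun j => if i = j then (1:ℝ) else 0), 0) / (-c), fun u => ?_⟩
  have hlin : F (u, 0) = ∑ i, u i * F ((fun j => if i = j then (1:ℝ) else 0), 0) := by
    have hL := LinearMap.pi_apply_eq_sum_univ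
      ((F : (Fin n → ℝ) × ℝ →L[ℝ] ℝ).toLinearMap.comp (LinearMap.inl ℝ (Fin n → ℝ) ℝ)) u
    simp only [LinearMap.coe_comp, Function.comp_apply, LinearMap.inl_apply,
      ContinuousLinearMap.coe_coe, smul_eq_mul] at hL
    exact hL
  have hsum : ∑ i, F ((fun j => if i = j then (1:ℝ) else 0), 0) / (-c) * u i
      = F (u, 0) / (-c) := by
    rw [hlin, Finset.sum_div]
    exact Finset.sum_congr rfl fun i _ => by ring
  rw [hsum]
  have h2 : F (u, 0) / -c ≤ φ u - φ 0 := by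
    rw [div_le_iff₀ (by linarith : (0:ℝ) < -c)]
    nlinarith [hmain u]
  linarith

open Classical in
/-- The `ℓ₀` pseudo-norm: the number of nonzero entries of `w`. -/
noncomputable def norm0 {p : ℕ} (w : Fin p → ℝ) : ℕ :=
  (Finset.univ.filter fun j => w j ≠ 0).card

/-- The ℓ₂-regularized cardinality-constrained problem has the same optimal value
as the convex integer min-max problem. -/
theorem sparse_regression_cio_equiv
    {n p k : ℕ} (hk1 : 1 ≤ k) (hkp : k ≤ p)
    (X : Matrix (Fin n) (Fin p) ℝ) (y : Fin n → ℝ)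
    (γ : ℝ) (hγ : 0 < γ)
    (ℓ : ℝ → ℝ → ℝ) (hconv : ∀ z : ℝ, ConvexOn ℝ Set.univ (ℓ z))
    (lhat : ℝ → ℝ → EReal)
    (hlhat : ∀ z a : ℝ, lhat z a = ⨆ u : ℝ, ((u * a - ℓ z u : ℝ) : EReal))
    (f : (Fin n → ℝ) → (Fin p → ℝ) → EReal)
    (hf : ∀ α s, f α s =
      -(∑ i, lhat (y i) (α i))
        - ((γ / 2 * ∑ j, s j * (∑ i, X i j * α i) ^ 2 : ℝ) : EReal)) :
    (⨅ w : {w : Fin p → ℝ // norm0 w ≤ k},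
        ((∑ i, ℓ (y i) (∑ j, X i j * w.1 j)
            + 1 / (2 * γ) * ∑ j, (w.1 j) ^ 2 : ℝ) : EReal))
      =
    (⨅ s : {s : Fin p → ℝ // (∀ j, s j = 0 ∨ s j = 1) ∧ ∑ j, s j ≤ (k : ℝ)},
        ⨆ α : Fin n → ℝ, f α s.1) := by
  classical
  have hγ2 : (2 : ℝ) * γ ≠ 0 := by positivity
  -- summation swap helper
  have hswap : ∀ (cvec : Fin p → ℝ) (β : Fin n → ℝ),
      ∑ i, β i * ∑ j, X i j * cvec j = ∑ j, cvec j * ∑ i, X i j * β i := by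
    intro cvec β
    calc ∑ i, β i * ∑ j, X i j * cvec j
        = ∑ i, ∑ j, β i * (X i j * cvec j) :=
          Finset.sum_congr rfl fun i _ => Finset.mul_sum _ _ _
      _ = ∑ j, ∑ i, β i * (X i j * cvec j) := Finset.sum_comm
      _ = ∑ j, cvec j * ∑ i, X i j * β i := by
          refine Finset.sum_congr rfl fun j _ => ?_
          rw [Finset.mul_sum]
          exact Finset.sum_congr rfl fun i _ => by ring
  -- weak duality
  have weak : ∀ s : Fin p → ℝ, (∀ j, s j = 0 ∨ s j = 1) →
      ∀ w : Fin p → ℝ, (∀ j, s j = 0 → w j = 0) →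
      ∀ α : Fin n → ℝ, f α s ≤
        ((∑ i, ℓ (y i) (∑ j, X i j * w j) + 1 / (2 * γ) * ∑ j, (w j) ^ 2 : ℝ) : EReal) := by
    intro s hbin w hsupp α
    have hsum1 : ((∑ i, ((∑ j, X i j * w j) * α i - ℓ (y i) (∑ j, X i j * w j)) : ℝ) : EReal)
        ≤ ∑ i, lhat (y i) (α i) := by
      rw [ereal_coe_finset_sum]
      refine Finset.sum_le_sum fun i _ => ?_
      rw [hlhat]
      exact le_iSup (fun t : ℝ => ((t * α i - ℓ (y i) t : ℝ) : EReal)) (∑ j, X i j * w j)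
    have hreal : -(∑ i, ((∑ j, X i j * w j) * α i - ℓ (y i) (∑ j, X i j * w j)))
          - γ / 2 * ∑ j, s j * (∑ i, X i j * α i) ^ 2
        ≤ ∑ i, ℓ (y i) (∑ j, X i j * w j) + 1 / (2 * γ) * ∑ j, (w j) ^ 2 := by
      have hkey : ∑ i, (∑ j, X i j * w j) * α i
          = ∑ j, w j * ∑ i, X i j * α i := by
        rw [← hswap w α]
        exact Finset.sum_congr rfl fun i _ => by ring
      have hnn : 0 ≤ ∑ j, (w j * (∑ i, X i j * α i) + 1/(2*γ) * (w j)^2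
          + γ/2 * (s j * (∑ i, X i j * α i) ^ 2)) := by
        refine Finset.sum_nonneg fun j _ => ?_
        rcases hbin j with h0 | h1
        · rw [hsupp j h0, h0]; simp
        · rw [h1, one_mul]
          have hid : w j * (∑ i, X i j * α i) + 1/(2*γ) * (w j)^2
              + γ/2 * ((∑ i, X i j * α i) ^ 2)
              = 1/(2*γ) * (w j + γ * (∑ i, X i j * α i))^2 := by
            field_simp
            ring
          rw [hid]
          positivity
      rw [Finset.sum_add_distrib, Finset.sum_add_distrib, ← Finset.mul_sum, ← Finset.mul_sum] at hnn
      have hsplit : ∑ i, ((∑ j, X i j * w j) * α i - ℓ (y i) (∑ j, X i j * w j))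
          = (∑ j, w j * ∑ i, X i j * α i) - ∑ i, ℓ (y i) (∑ j, X i j * w j) := by
        rw [Finset.sum_sub_distrib, hkey]
      rw [hsplit]
      linarith
    calc f α s = -(∑ i, lhat (y i) (α i))
          - ((γ / 2 * ∑ j, s j * (∑ i, X i j * α i) ^ 2 : ℝ) : EReal) := hf α s
      _ ≤ ((-(∑ i, ((∑ j, X i j * w j) * α i - ℓ (y i) (∑ j, X i j * w j))) : ℝ) : EReal)
          - ((γ / 2 * ∑ j, s j * (∑ i, X i j * α i) ^ 2 : ℝ) : EReal) := by
          refine EReal.sub_le_sub ?_ le_rfl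
          rw [EReal.coe_neg]
          exact EReal.neg_le_neg_iff.mpr hsum1
      _ = ((-(∑ i, ((∑ j, X i j * w j) * α i - ℓ (y i) (∑ j, X i j * w j)))
          - γ / 2 * ∑ j, s j * (∑ i, X i j * α i) ^ 2 : ℝ) : EReal) := by
          rw [EReal.coe_sub]
      _ ≤ _ := EReal.coe_le_coe_iff.mpr hreal
  -- strong duality for a fixed binary support vector s
  have stepB : ∀ s : Fin p → ℝ, (∀ j, s j = 0 ∨ s j = 1) → (∑ j, s j ≤ (k:ℝ)) →
      (⨅ w : {w : Fin p → ℝ // norm0 w ≤ k},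
        ((∑ i, ℓ (y i) (∑ j, X i j * w.1 j)
            + 1 / (2 * γ) * ∑ j, (w.1 j) ^ 2 : ℝ) : EReal))
        ≤ ⨆ α : Fin n → ℝ, f α s := by
    intro s hbin hsk
    have hsnn : ∀ j, 0 ≤ s j := fun j => by rcases hbin j with h | h <;> rw [h] <;> norm_num
    -- 1-d subgradients of each loss at 0
    have hsub : ∀ i : Fin n, ∃ mi : ℝ, ∀ t : ℝ, ℓ (y i) 0 + mi * t ≤ ℓ (y i) t :=
      fun i => exists_subgrad_one_dim _ (hconv (y i))
    choose m hm using hsub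
    -- the perturbed objective
    set Q : (Fin p → ℝ) → (Fin n → ℝ) → ℝ := fun w u =>
      ∑ i, ℓ (y i) ((∑ j, X i j * (s j * w j)) + u i)
        + 1/(2*γ) * ∑ j, s j * (w j)^2 with hQdef
    -- lower bound for Q, uniform in w
    have hQlb : ∀ (u : Fin n → ℝ) (w : Fin p → ℝ),
        (∑ i, ℓ (y i) 0) + (∑ i, m i * u i)
          - γ/2 * ∑ j, (∑ i, X i j * m i)^2 ≤ Q w u := by
      intro u w
      have h1 : ∑ i, (ℓ (y i) 0 + m i * ((∑ j, X i j * (s j * w j)) + u i))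
          ≤ ∑ i, ℓ (y i) ((∑ j, X i j * (s j * w j)) + u i) :=
        Finset.sum_le_sum fun i _ => hm i _
      have h2 : ∑ i, (ℓ (y i) 0 + m i * ((∑ j, X i j * (s j * w j)) + u i))
          = (∑ i, ℓ (y i) 0) + ((∑ j, (s j * w j) * ∑ i, X i j * m i)
            + ∑ i, m i * u i) := by
        calc ∑ i, (ℓ (y i) 0 + m i * ((∑ j, X i j * (s j * w j)) + u i))
            = (∑ i, ℓ (y i) 0) + ((∑ i, m i * ∑ j, X i j * (s j * w j))
              + ∑ i, m i * u i) := by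
              rw [← Finset.sum_add_distrib, ← Finset.sum_add_distrib]
              exact Finset.sum_congr rfl fun i _ => by ring
          _ = (∑ i, ℓ (y i) 0) + ((∑ j, (s j * w j) * ∑ i, X i j * m i)
              + ∑ i, m i * u i) := by
              rw [hswap (fun j => s j * w j) m]
      have h3 : ∀ j, -(γ/2 * ((∑ i, X i j * m i))^2)
          ≤ (s j * w j) * (∑ i, X i j * m i) + 1/(2*γ) * (s j * (w j)^2) := by
        intro j
        rcases hbin j with h0 | h1
        · rw [h0]
          have : 0 ≤ γ/2 * ((∑ i, X i j * m i))^2 := by positivity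
          simp only [zero_mul, mul_zero]
          linarith
        · rw [h1, one_mul]
          have hid : (w j) * (∑ i, X i j * m i) + 1/(2*γ) * ((w j)^2)
              + γ/2 * ((∑ i, X i j * m i))^2
              = 1/(2*γ) * (w j + γ * (∑ i, X i j * m i))^2 := by
            field_simp
            ring
          nlinarith [sq_nonneg (w j + γ * (∑ i, X i j * m i)), hγ,
            mul_nonneg (le_of_lt (by positivity : (0:ℝ) < 1/(2*γ)))
              (sq_nonneg (w j + γ * (∑ i, X i j * m i)))]
      have h4 : -(γ/2 * ∑ j, (∑ i, X i j * m i)^2)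
          ≤ (∑ j, (s j * w j) * ∑ i, X i j * m i) + 1/(2*γ) * ∑ j, s j * (w j)^2 := by
        have := Finset.sum_le_sum fun j (_ : j ∈ Finset.univ) => h3 j
        rw [Finset.sum_add_distrib, Finset.sum_neg_distrib, ← Finset.mul_sum] at this
        rw [← Finset.mul_sum] at this
        linarith [this]
      rw [hQdef]
      dsimp only
      linarith [h1, h2, h4]
    have hQne : ∀ u : Fin n → ℝ, (Set.range fun w => Q w u).Nonempty :=
      fun u => ⟨Q 0 u, 0, rfl⟩
    have hQbdd : ∀ u : Fin n → ℝ, BddBelow (Set.range fun w => Q w u) := by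
      intro u
      refine ⟨(∑ i, ℓ (y i) 0) + (∑ i, m i * u i)
        - γ/2 * ∑ j, (∑ i, X i j * m i)^2, ?_⟩
      rintro x ⟨w, rfl⟩
      exact hQlb u w
    -- the perturbation (value) function
    set φ : (Fin n → ℝ) → ℝ := fun u => sInf (Set.range fun w => Q w u) with hφdef
    have hφle : ∀ (w : Fin p → ℝ) (u : Fin n → ℝ), φ u ≤ Q w u :=
      fun w u => csInf_le (hQbdd u) ⟨w, rfl⟩
    -- joint convexity of Q
    have hQconv : ∀ (w₁ w₂ : Fin p → ℝ) (u₁ u₂ : Fin n → ℝ) (a b : ℝ),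
        0 ≤ a → 0 ≤ b → a + b = 1 →
        Q (a • w₁ + b • w₂) (a • u₁ + b • u₂) ≤ a * Q w₁ u₁ + b * Q w₂ u₂ := by
      intro w₁ w₂ u₁ u₂ a b ha hb hab
      have harg : ∀ i, (∑ j, X i j * (s j * (a • w₁ + b • w₂) j)) + (a • u₁ + b • u₂) i
          = a * ((∑ j, X i j * (s j * w₁ j)) + u₁ i)
            + b * ((∑ j, X i j * (s j * w₂ j)) + u₂ i) := by
        intro i
        simp only [Pi.add_apply, Pi.smul_apply, smul_eq_mul]
        have hterm : ∀ j ∈ Finset.univ, X i j * (s j * (a * w₁ j + b * w₂ j))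
            = a * (X i j * (s j * w₁ j)) + b * (X i j * (s j * w₂ j)) :=
          fun j _ => by ring
        rw [Finset.sum_congr rfl hterm, Finset.sum_add_distrib,
          ← Finset.mul_sum, ← Finset.mul_sum]
        ring
      have hℓ : ∀ i, ℓ (y i) ((∑ j, X i j * (s j * (a • w₁ + b • w₂) j)) + (a • u₁ + b • u₂) i)
          ≤ a * ℓ (y i) ((∑ j, X i j * (s j * w₁ j)) + u₁ i)
            + b * ℓ (y i) ((∑ j, X i j * (s j * w₂ j)) + u₂ i) := by
        intro i
        rw [harg i]
        have := (hconv (y i)).2 (Set.mem_univ ((∑ j, X i j * (s j * w₁ j)) + u₁ i))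
          (Set.mem_univ ((∑ j, X i j * (s j * w₂ j)) + u₂ i)) ha hb hab
        simpa [smul_eq_mul] using this
      have hreg : ∀ j, s j * ((a • w₁ + b • w₂) j)^2
          ≤ a * (s j * (w₁ j)^2) + b * (s j * (w₂ j)^2) := by
        intro j
        simp only [Pi.add_apply, Pi.smul_apply, smul_eq_mul]
        have hb' : b = 1 - a := by linarith
        subst hb'
        nlinarith [mul_nonneg (mul_nonneg (mul_nonneg ha (by linarith : (0:ℝ) ≤ 1 - a)) (hsnn j))
          (sq_nonneg (w₁ j - w₂ j))]
      have hA := Finset.sum_le_sum fun i (_ : i ∈ Finset.univ) => hℓ i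
      have hB := Finset.sum_le_sum fun j (_ : j ∈ Finset.univ) => hreg j
      rw [Finset.sum_add_distrib, ← Finset.mul_sum, ← Finset.mul_sum] at hA
      rw [Finset.sum_add_distrib, ← Finset.mul_sum, ← Finset.mul_sum] at hB
      rw [hQdef]
      dsimp only
      have hc : (0:ℝ) ≤ 1/(2*γ) := by positivity
      nlinarith [mul_le_mul_of_nonneg_left hB hc]
    -- convexity of φ
    have hφconv : ConvexOn ℝ Set.univ φ := by
      refine ⟨convex_univ, fun u₁ _ u₂ _ a b ha hb hab => ?_⟩
      simp only [smul_eq_mul]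
      refine le_of_forall_pos_le_add fun ε hε => ?_
      obtain ⟨q₁, hq₁mem, hq₁⟩ := Real.lt_sInf_add_pos (hQne u₁) (half_pos hε)
      obtain ⟨w₁, rfl⟩ := hq₁mem
      obtain ⟨q₂, hq₂mem, hq₂⟩ := Real.lt_sInf_add_pos (hQne u₂) (half_pos hε)
      obtain ⟨w₂, rfl⟩ := hq₂mem
      have h1 : φ (a • u₁ + b • u₂) ≤ Q (a • w₁ + b • w₂) (a • u₁ + b • u₂) :=
        hφle _ _
      have h2 := hQconv w₁ w₂ u₁ u₂ a b ha hb hab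
      have h3 : a * Q w₁ u₁ ≤ a * (φ u₁ + ε/2) :=
        mul_le_mul_of_nonneg_left hq₁.le ha
      have h4 : b * Q w₂ u₂ ≤ b * (φ u₂ + ε/2) :=
        mul_le_mul_of_nonneg_left hq₂.le hb
      have h5 : a * (φ u₁ + ε/2) + b * (φ u₂ + ε/2)
          = a * φ u₁ + b * φ u₂ + ε/2 := by
        rw [mul_add, mul_add]
        linear_combination (ε/2) * hab
      calc φ (a • u₁ + b • u₂) ≤ a * Q w₁ u₁ + b * Q w₂ u₂ := h1.trans h2
        _ ≤ a * (φ u₁ + ε/2) + b * (φ u₂ + ε/2) := add_le_add h3 h4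
        _ = a * φ u₁ + b * φ u₂ + ε/2 := h5
        _ ≤ a * φ u₁ + b * φ u₂ + ε := by linarith
    -- subgradient of φ at 0
    obtain ⟨β, hβ⟩ := exists_subgrad_pi φ hφconv
    set K : ℝ := -(φ 0) - γ/2 * ∑ j, s j * (∑ i, X i j * β i)^2 with hK
    have hmaster : ∀ v : Fin n → ℝ, ∑ i, (v i * β i - ℓ (y i) (v i)) ≤ K := by
      intro v
      set wst : Fin p → ℝ := fun j => -(γ * ∑ i, X i j * β i) with hwst
      set ust : Fin n → ℝ := fun i => v i - ∑ j, X i j * (s j * wst j) with hust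
      have h1 : φ 0 + ∑ i, β i * ust i ≤ Q wst ust := (hβ ust).trans (hφle wst ust)
      have hQv : Q wst ust = ∑ i, ℓ (y i) (v i) + 1/(2*γ) * ∑ j, s j * (wst j)^2 := by
        rw [hQdef]
        dsimp only
        congr 1
        refine Finset.sum_congr rfl fun i _ => ?_
        congr 1
        simp only [hust]
        ring
      have h2 : ∑ i, β i * ust i
          = (∑ i, β i * v i) - ∑ j, (s j * wst j) * ∑ i, X i j * β i := by
        simp only [hust]
        calc ∑ i, β i * (v i - ∑ j, X i j * (s j * wst j))
            = (∑ i, β i * v i) - ∑ i, β i * ∑ j, X i j * (s j * wst j) := by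
              rw [← Finset.sum_sub_distrib]
              exact Finset.sum_congr rfl fun i _ => by ring
          _ = (∑ i, β i * v i) - ∑ j, (s j * wst j) * ∑ i, X i j * β i := by
              rw [hswap (fun j => s j * wst j) β]
      have h3 : ∑ j, (s j * wst j) * ∑ i, X i j * β i
          = -γ * ∑ j, s j * (∑ i, X i j * β i)^2 := by
        rw [Finset.mul_sum]
        refine Finset.sum_congr rfl fun j _ => ?_
        simp only [hwst]
        ring
      have h4 : 1/(2*γ) * ∑ j, s j * (wst j)^2
          = γ/2 * ∑ j, s j * (∑ i, X i j * β i)^2 := by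
        have hh : ∑ j, s j * (wst j)^2 = γ^2 * ∑ j, s j * (∑ i, X i j * β i)^2 := by
          rw [Finset.mul_sum]
          refine Finset.sum_congr rfl fun j _ => ?_
          simp only [hwst]
          ring
        rw [hh]
        field_simp
      have h5 : ∑ i, (v i * β i - ℓ (y i) (v i))
          = (∑ i, β i * v i) - ∑ i, ℓ (y i) (v i) := by
        rw [Finset.sum_sub_distrib]
        congr 1
        exact Finset.sum_congr rfl fun i _ => by ring
      rw [hK]
      rw [hQv, h2, h3] at h1
      rw [h5]
      linarith [h1, h4]
    -- per-coordinate suprema are bounded above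
    have hbound : ∀ i : Fin n, BddAbove (Set.range fun t : ℝ => t * β i - ℓ (y i) t) := by
      intro i
      refine ⟨K - ∑ i' ∈ Finset.univ.erase i, ((0:ℝ) * β i' - ℓ (y i') 0), ?_⟩
      rintro x ⟨t, rfl⟩
      dsimp only
      have hv := hmaster (Function.update (0 : Fin n → ℝ) i t)
      rw [← Finset.add_sum_erase _ _ (Finset.mem_univ i)] at hv
      have he : ∀ i' ∈ Finset.univ.erase i,
          (Function.update (0 : Fin n → ℝ) i t i') * β i'
            - ℓ (y i') (Function.update (0 : Fin n → ℝ) i t i')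
          = (0:ℝ) * β i' - ℓ (y i') 0 := by
        intro i' hi'
        rw [Function.update_of_ne (Finset.ne_of_mem_erase hi')]
        simp
      rw [Finset.sum_congr rfl he, Function.update_self] at hv
      linarith
    have hLub : ∀ (i : Fin n) (t : ℝ), t * β i - ℓ (y i) t
        ≤ sSup (Set.range fun t : ℝ => t * β i - ℓ (y i) t) :=
      fun i t => le_csSup (hbound i) ⟨t, rfl⟩
    have hLsum : ∑ i, sSup (Set.range fun t : ℝ => t * β i - ℓ (y i) t) ≤ K := by
      refine le_of_forall_pos_le_add fun ε hε => ?_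
      have hε' : (0:ℝ) < ε / (n + 1) := by positivity
      have hch : ∀ i : Fin n, ∃ t : ℝ,
          sSup (Set.range fun t : ℝ => t * β i - ℓ (y i) t) - ε/(n+1)
            < t * β i - ℓ (y i) t := by
        intro i
        obtain ⟨x, hxmem, hx⟩ := exists_lt_of_lt_csSup
          (Set.range_nonempty (fun t : ℝ => t * β i - ℓ (y i) t))
          (by linarith : sSup (Set.range fun t : ℝ => t * β i - ℓ (y i) t) - ε/(n+1)
            < sSup (Set.range fun t : ℝ => t * β i - ℓ (y i) t))
        obtain ⟨t, rfl⟩ := hxmem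
        exact ⟨t, hx⟩
      choose t ht using hch
      have h1 := hmaster t
      have h2 : ∑ i, (sSup (Set.range fun t : ℝ => t * β i - ℓ (y i) t) - ε/(n+1))
          ≤ ∑ i, (t i * β i - ℓ (y i) (t i)) :=
        Finset.sum_le_sum fun i _ => (ht i).le
      rw [Finset.sum_sub_distrib] at h2
      have h3 : ∑ _i : Fin n, ε/((n:ℝ)+1) = (n:ℝ) * (ε/(n+1)) := by
        rw [Finset.sum_const, Finset.card_univ, Fintype.card_fin, nsmul_eq_mul]
      have h4 : (n:ℝ) * (ε/(n+1)) ≤ ε := by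
        have hle : (n:ℝ) * (ε/(n+1)) ≤ ((n:ℝ)+1) * (ε/(n+1)) := by
          have : (n:ℝ) ≤ (n:ℝ)+1 := by linarith
          exact mul_le_mul_of_nonneg_right this hε'.le
        have heq : ((n:ℝ)+1) * (ε/(n+1)) = ε := by
          field_simp
        linarith
      linarith [h1, h2, h3, h4]
    have hlhatle : ∀ i : Fin n, lhat (y i) (β i)
        ≤ ((sSup (Set.range fun t : ℝ => t * β i - ℓ (y i) t) : ℝ) : EReal) := by
      intro i
      rw [hlhat]
      exact iSup_le fun t => EReal.coe_le_coe_iff.mpr (hLub i t)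
    have hsumlhat : ∑ i, lhat (y i) (β i) ≤ ((K : ℝ) : EReal) := by
      calc ∑ i, lhat (y i) (β i)
          ≤ ∑ i, ((sSup (Set.range fun t : ℝ => t * β i - ℓ (y i) t) : ℝ) : EReal) :=
            Finset.sum_le_sum fun i _ => hlhatle i
        _ = ((∑ i, sSup (Set.range fun t : ℝ => t * β i - ℓ (y i) t) : ℝ) : EReal) :=
            (ereal_coe_finset_sum _ _).symm
        _ ≤ (K : EReal) := EReal.coe_le_coe_iff.mpr hLsum
    have hfβ : ((φ 0 : ℝ) : EReal) ≤ f β s := by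
      rw [hf]
      have h1 : ((-K : ℝ) : EReal) ≤ -(∑ i, lhat (y i) (β i)) := by
        rw [EReal.coe_neg]
        exact EReal.neg_le_neg_iff.mpr hsumlhat
      have h2 : (φ 0 : ℝ) = -K - γ / 2 * ∑ j, s j * (∑ i, X i j * β i)^2 := by
        rw [hK]; ring
      calc ((φ 0 : ℝ) : EReal)
          = ((-K - γ / 2 * ∑ j, s j * (∑ i, X i j * β i)^2 : ℝ) : EReal) := by rw [← h2]
        _ = ((-K : ℝ) : EReal) - ((γ / 2 * ∑ j, s j * (∑ i, X i j * β i)^2 : ℝ) : EReal) := by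
            rw [EReal.coe_sub]
        _ ≤ -(∑ i, lhat (y i) (β i))
            - ((γ / 2 * ∑ j, s j * (∑ i, X i j * β i)^2 : ℝ) : EReal) :=
            EReal.sub_le_sub h1 le_rfl
    -- cardinality of the support set
    have hscount : ∑ j, s j = ((Finset.univ.filter fun j => s j = 1).card : ℝ) := by
      rw [← Finset.sum_boole]
      refine Finset.sum_congr rfl fun j _ => ?_
      rcases hbin j with h | h <;> simp [h]
    have hTk : (Finset.univ.filter fun j => s j = 1).card ≤ k := by
      have hc : ((Finset.univ.filter fun j => s j = 1).card : ℝ) ≤ (k : ℝ) := by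
        rw [← hscount]; exact hsk
      exact_mod_cast hc
    have hmaskn : ∀ w : Fin p → ℝ, norm0 (fun j => s j * w j) ≤ k := by
      intro w
      unfold norm0
      refine le_trans (Finset.card_le_card ?_) hTk
      intro j hj
      simp only [Finset.mem_filter, Finset.mem_univ, true_and] at hj ⊢
      rcases hbin j with h | h
      · exact absurd (by rw [h]; ring) hj
      · exact h
    -- the primal optimum is at most φ 0
    have hLHSle : (⨅ w : {w : Fin p → ℝ // norm0 w ≤ k},
        ((∑ i, ℓ (y i) (∑ j, X i j * w.1 j)
            + 1 / (2 * γ) * ∑ j, (w.1 j) ^ 2 : ℝ) : EReal)) ≤ ((φ 0 : ℝ) : EReal) := by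
      refine ereal_le_coe_of_forall_add fun ε hε => ?_
      obtain ⟨q, hqmem, hqlt⟩ := Real.lt_sInf_add_pos (hQne 0) hε
      obtain ⟨w, rfl⟩ := hqmem
      have hQP : (∑ i, ℓ (y i) (∑ j, X i j * (s j * w j))
          + 1 / (2 * γ) * ∑ j, (s j * w j) ^ 2 : ℝ) = Q w 0 := by
        rw [hQdef]
        dsimp only
        congr 1
        · refine Finset.sum_congr rfl fun i _ => ?_
          rw [Pi.zero_apply, add_zero]
        · congr 1
          refine Finset.sum_congr rfl fun j _ => ?_
          rcases hbin j with h | h <;> rw [h] <;> ring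
      refine iInf_le_of_le ⟨fun j => s j * w j, hmaskn w⟩ ?_
      have hfin : ((∑ i, ℓ (y i) (∑ j, X i j * (s j * w j))
          + 1 / (2 * γ) * ∑ j, (s j * w j) ^ 2 : ℝ) : EReal)
          ≤ ((φ 0 + ε : ℝ) : EReal) := by
        rw [hQP]
        exact EReal.coe_le_coe_iff.mpr hqlt.le
      exact hfin
    exact hLHSle.trans (hfβ.trans (le_iSup (fun α => f α s) β))
  -- conclusion
  refine le_antisymm (le_iInf fun sc => stepB sc.1 sc.2.1 sc.2.2) (le_iInf fun wc => ?_)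
  set s : Fin p → ℝ := fun j => if wc.1 j ≠ 0 then 1 else 0 with hs
  have hbin : ∀ j, s j = 0 ∨ s j = 1 := by
    intro j
    by_cases h : wc.1 j ≠ 0 <;> simp [hs, h]
  have hsum : ∑ j, s j ≤ (k : ℝ) := by
    have h1 : ∑ j, s j = ((Finset.univ.filter fun j => wc.1 j ≠ 0).card : ℝ) := by
      simp only [hs]
      rw [Finset.sum_boole]
    have h2 : (Finset.univ.filter fun j => wc.1 j ≠ 0).card ≤ k := by
      have h := wc.2
      unfold norm0 at h
      exact h
    rw [h1]
    exact_mod_cast h2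
  refine iInf_le_of_le ⟨s, hbin, hsum⟩ ?_
  refine iSup_le fun α => weak s hbin wc.1 (fun j hj => ?_) α
  by_contra hne
  rw [hs] at hj
  simp [hne] at hj
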